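/- Let n ≥ 0 and let f, y : Fin n → ℝ satisfy 0 ≤ y_t, 2·y_t ≤ f_t ≤ 3·y_t, and f_t ≤ 1 for every t. Let F = ∑_t f_t and Y = ∑_t y_t. Then ∏_{t} (1 − f_t/2 − y_t/2) · (1 + ∑_t (f_t − y_t)/(2 − f_t − y_t)) ≤ e^{−(F+Y)/2}·(1 + (F − Y)/2). -/

import Mathlib

open Finset

lemma pade_exp (a : ℝ) (h0 : 0 ≤ a) (h1 : a ≤ 1) :
    (2 - a) * Real.exp a ≤ 2 + a := by
  have hb := Real.exp_bound (x := a) (by rw [abs_of_nonneg h0]; exact h1) (n := 3) (by norm_num)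
  rw [abs_of_nonneg h0] at hb
  have hsum : ∑ i ∈ Finset.range 3, a ^ i / (Nat.factorial i : ℝ) = 1 + a + a ^ 2 / 2 := by
    simp [Finset.sum_range_succ, Nat.factorial]
  rw [hsum] at hb
  have h2 := (abs_le.mp hb).2
  norm_num [Nat.factorial] at h2
  have hb' : Real.exp a ≤ 1 + a + a ^ 2 / 2 + a ^ 3 * (2 / 9) := by linarith
  nlinarith [pow_nonneg h0 3, pow_nonneg h0 4]

lemma key_step (a g G : ℝ) (hg0 : 0 ≤ g) (hga : g ≤ a) (ha : a ≤ 3/4) (hG : 0 ≤ G) :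
    (1 - a) * (1 + G) + g / 2 ≤ Real.exp (-a) * (1 + G + g / 2) := by
  have h0 : 0 ≤ a := le_trans hg0 hga
  have hp := pade_exp a h0 (by linarith)
  have hE : 0 < Real.exp a := Real.exp_pos a
  have hE1 : 1 ≤ Real.exp a := Real.one_le_exp h0
  rw [Real.exp_neg]
  have hA : (a/2) * (Real.exp a - 1) ≤ 1 - (1 - a) * Real.exp a := by linarith
  have hB : 0 ≤ 1 - (1 - a) * Real.exp a := by nlinarith
  have hC : (g/2) * (Real.exp a - 1) ≤ (a/2) * (Real.exp a - 1) := by nlinarith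
  have main : ((1 - a) * (1 + G) + g / 2) * Real.exp a ≤ 1 + G + g / 2 := by
    nlinarith [mul_nonneg hG hB]
  calc (1 - a) * (1 + G) + g / 2
      = (((1 - a) * (1 + G) + g / 2) * Real.exp a) * (Real.exp a)⁻¹ := by
        rw [mul_assoc, mul_inv_cancel₀ (Real.exp_ne_zero a), mul_one]
    _ ≤ (1 + G + g / 2) * (Real.exp a)⁻¹ :=
        mul_le_mul_of_nonneg_right main (by positivity)
    _ = (Real.exp a)⁻¹ * (1 + G + g / 2) := by ring

lemma aux_ineq {ι : Type*} (s : Finset ι) (a g : ι → ℝ)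
    (h : ∀ t ∈ s, 0 ≤ g t ∧ g t ≤ a t ∧ a t ≤ 3/4) :
    (∏ t ∈ s, (1 - a t)) * (1 + ∑ t ∈ s, g t / (2 * (1 - a t)))
      ≤ Real.exp (-∑ t ∈ s, a t) * (1 + (∑ t ∈ s, g t) / 2) := by
  induction s using Finset.cons_induction with
  | empty => simp
  | cons t s ht ih =>
    obtain ⟨hg0, hga, ha34⟩ := h t (Finset.mem_cons_self t s)
    have hrest : ∀ u ∈ s, 0 ≤ g u ∧ g u ≤ a u ∧ a u ≤ 3/4 :=
      fun u hu => h u (Finset.mem_cons_of_mem hu)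
    have IH := ih hrest
    have ha0 : 0 ≤ a t := le_trans hg0 hga
    have hat1 : (0:ℝ) < 1 - a t := by linarith
    have hP0 : 0 ≤ ∏ u ∈ s, (1 - a u) := by
      apply Finset.prod_nonneg
      intro u hu
      have := hrest u hu
      linarith [this.1, this.2.1, this.2.2]
    have hPE : ∏ u ∈ s, (1 - a u) ≤ Real.exp (-∑ u ∈ s, a u) := by
      have hle : ∏ u ∈ s, (1 - a u) ≤ ∏ u ∈ s, Real.exp (-(a u)) := by
        apply Finset.prod_le_prod
        · intro u hu
          have := hrest u hu
          linarith [this.1, this.2.1, this.2.2]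
        · intro u hu
          have := Real.add_one_le_exp (-(a u))
          linarith
      rw [← Real.exp_sum, Finset.sum_neg_distrib] at hle
      exact hle
    have hG0 : 0 ≤ (∑ u ∈ s, g u) / 2 := by
      apply div_nonneg _ (by norm_num)
      exact Finset.sum_nonneg fun u hu => (hrest u hu).1
    rw [Finset.prod_cons, Finset.sum_cons, Finset.sum_cons, Finset.sum_cons]
    have expand : (1 - a t) * (∏ u ∈ s, (1 - a u)) *
        (1 + (g t / (2 * (1 - a t)) + ∑ u ∈ s, g u / (2 * (1 - a u))))
        = (1 - a t) * ((∏ u ∈ s, (1 - a u)) * (1 + ∑ u ∈ s, g u / (2 * (1 - a u))))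
          + (∏ u ∈ s, (1 - a u)) * (g t / 2) := by
      field_simp
      ring
    rw [expand]
    have step1 : (1 - a t) * ((∏ u ∈ s, (1 - a u)) * (1 + ∑ u ∈ s, g u / (2 * (1 - a u))))
        ≤ (1 - a t) * (Real.exp (-∑ u ∈ s, a u) * (1 + (∑ u ∈ s, g u) / 2)) :=
      mul_le_mul_of_nonneg_left IH (le_of_lt hat1)
    have step2 : (∏ u ∈ s, (1 - a u)) * (g t / 2)
        ≤ Real.exp (-∑ u ∈ s, a u) * (g t / 2) :=
      mul_le_mul_of_nonneg_right hPE (by positivity)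
    have step3 : (1 - a t) * (1 + (∑ u ∈ s, g u) / 2) + g t / 2
        ≤ Real.exp (-(a t)) * (1 + (∑ u ∈ s, g u) / 2 + g t / 2) :=
      key_step (a t) (g t) ((∑ u ∈ s, g u) / 2) hg0 hga ha34 hG0
    have hEs : 0 < Real.exp (-∑ u ∈ s, a u) := Real.exp_pos _
    calc (1 - a t) * ((∏ u ∈ s, (1 - a u)) * (1 + ∑ u ∈ s, g u / (2 * (1 - a u))))
          + (∏ u ∈ s, (1 - a u)) * (g t / 2)
        ≤ (1 - a t) * (Real.exp (-∑ u ∈ s, a u) * (1 + (∑ u ∈ s, g u) / 2))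
          + Real.exp (-∑ u ∈ s, a u) * (g t / 2) := add_le_add step1 step2
      _ = Real.exp (-∑ u ∈ s, a u) *
            ((1 - a t) * (1 + (∑ u ∈ s, g u) / 2) + g t / 2) := by ring
      _ ≤ Real.exp (-∑ u ∈ s, a u) *
            (Real.exp (-(a t)) * (1 + (∑ u ∈ s, g u) / 2 + g t / 2)) :=
          mul_le_mul_of_nonneg_left step3 (le_of_lt hEs)
      _ = Real.exp (-(a t + ∑ u ∈ s, a u)) * (1 + (g t + ∑ u ∈ s, g u) / 2) := by
          rw [show (-(a t + ∑ u ∈ s, a u)) = (-∑ u ∈ s, a u) + (-(a t)) from by ring,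
            Real.exp_add]
          ring

/-- Hybrid-argument inequality from the proof of Lemma 5.11. -/
theorem adwords_hybrid_inequality
    (n : ℕ) (f y : Fin n → ℝ)
    (hy : ∀ t, 0 ≤ y t) (hfy : ∀ t, 2 * y t ≤ f t ∧ f t ≤ 3 * y t)
    (hf1 : ∀ t, f t ≤ 1) :
    (∏ t, (1 - f t / 2 - y t / 2)) * (1 + ∑ t, (f t - y t) / (2 - f t - y t))
      ≤ Real.exp (-((∑ t, f t) + ∑ t, y t) / 2) * (1 + ((∑ t, f t) - ∑ t, y t) / 2) := by
  have key := aux_ineq (Finset.univ : Finset (Fin n))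
    (fun t => (f t + y t) / 2) (fun t => f t - y t)
    (by
      intro t _
      have h1 := hy t
      have h2 := (hfy t).1
      have h3 := (hfy t).2
      have h4 := hf1 t
      refine ⟨by linarith, by linarith, by linarith⟩)
  have e1 : ∀ t : Fin n, 1 - (f t + y t) / 2 = 1 - f t / 2 - y t / 2 := fun t => by ring
  have e2 : ∀ t : Fin n,
      (f t - y t) / (2 * (1 - f t / 2 - y t / 2)) = (f t - y t) / (2 - f t - y t) := by
    intro t; congr 1; ring
  have e3 : ∑ t, (f t + y t) / 2 = ((∑ t, f t) + ∑ t, y t) / 2 := by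
    rw [← Finset.sum_add_distrib, Finset.sum_div]
  have e4 : ∑ t, (f t - y t) = (∑ t, f t) - ∑ t, y t := Finset.sum_sub_distrib f y
  simp only [e1, e2, e3, e4] at key
  rw [neg_div]
  exact key
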